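/- Let A be a closed densely defined operator on a Hilbert space H and B a bounded self-adjoint operator such that BA ⊆ AB. Then for every bounded Borel measurable function f : σ(B) → ℂ, f(B)A = A f(B) holds on D(A); i.e., f(B) maps D(A) into D(A) and A f(B) x = f(B) A x for all x ∈ D(A). -/

import Mathlib

/-!
STATEMENT 4. Let `A` be a closed densely defined operator on a Hilbert space `H` and `B` a
bounded self-adjoint operator with `BA ⊆ AB`.  Then for every bounded Borel function `f`,
`f(B)A = A f(B)` on `D(A)`.  By the spectral theorem a bounded self-adjoint operator is
unitarily equivalent to multiplication by a bounded measurable real function `b` on some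
`L²(X,μ)`, and the Borel functional calculus `f(B)` is then multiplication by `f ∘ b`; we
state the theorem in this spectral model: `H = L²(X,μ)`, `B` = multiplication by `b`, and
`f(B)` = multiplication by `f ∘ b` for `f : ℝ → ℂ` bounded and Borel measurable.
-/

open MeasureTheory

namespace Stmt4Aux

open Filter Topology Set ENNReal NNReal

variable {X : Type*} [MeasurableSpace X] {μ : Measure X} {b : X → ℝ} {M : ℝ}
variable {A : Lp ℂ 2 μ →ₗ.[ℂ] Lp ℂ 2 μ}

/-- The commutation predicate: multiplication by `g ∘ b` maps the graph of `A` into itself. -/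
def Q (μ : Measure X) (b : X → ℝ) (A : Lp ℂ 2 μ →ₗ.[ℂ] Lp ℂ 2 μ) (g : ℝ → ℂ) : Prop :=
  ∀ x : A.domain, ∃ y : A.domain,
    (((y : Lp ℂ 2 μ) : X → ℂ) =ᵐ[μ] fun ω => g (b ω) * ((x : Lp ℂ 2 μ) : X → ℂ) ω) ∧
    ((A y : X → ℂ) =ᵐ[μ] fun ω => g (b ω) * ((A x : X → ℂ) ω))

theorem Q.congr {g g' : ℝ → ℂ} (h : ∀ t, g t = g' t) (hg : Q μ b A g) : Q μ b A g' :=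
  funext h ▸ hg

theorem Q.zero : Q μ b A (fun _ => (0 : ℂ)) := by
  intro x
  refine ⟨0, ?_, ?_⟩
  · filter_upwards [Lp.coeFn_zero ℂ 2 μ] with ω hω
    simpa using hω
  · rw [A.map_zero]
    filter_upwards [Lp.coeFn_zero ℂ 2 μ] with ω hω
    simpa using hω

theorem Q.one : Q μ b A (fun _ => (1 : ℂ)) := by
  intro x
  exact ⟨x, by simp, by simp⟩

theorem Q.add {g h : ℝ → ℂ} (hg : Q μ b A g) (hh : Q μ b A h) :
    Q μ b A (fun t => g t + h t) := by
  intro x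
  obtain ⟨y, hy1, hy2⟩ := hg x
  obtain ⟨z, hz1, hz2⟩ := hh x
  refine ⟨y + z, ?_, ?_⟩
  · filter_upwards [hy1, hz1, Lp.coeFn_add (y : Lp ℂ 2 μ) (z : Lp ℂ 2 μ)] with ω h1 h2 h3
    simp only [Submodule.coe_add] at h3 ⊢
    rw [h3]
    simp only [Pi.add_apply, h1, h2]
    ring
  · rw [A.map_add]
    filter_upwards [hy2, hz2, Lp.coeFn_add (A y) (A z)] with ω h1 h2 h3
    rw [h3]
    simp only [Pi.add_apply, h1, h2]
    ring

theorem Q.smul {g : ℝ → ℂ} (c : ℂ) (hg : Q μ b A g) :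
    Q μ b A (fun t => c * g t) := by
  intro x
  obtain ⟨y, hy1, hy2⟩ := hg x
  refine ⟨c • y, ?_, ?_⟩
  · filter_upwards [hy1, Lp.coeFn_smul c (y : Lp ℂ 2 μ)] with ω h1 h2
    simp only [Submodule.coe_smul] at h2 ⊢
    rw [h2]
    simp only [Pi.smul_apply, smul_eq_mul, h1]
    ring
  · rw [A.map_smul]
    filter_upwards [hy2, Lp.coeFn_smul c (A y)] with ω h1 h2
    rw [h2]
    simp only [Pi.smul_apply, smul_eq_mul, h1]
    ring

theorem Q.mul {g h : ℝ → ℂ} (hg : Q μ b A g) (hh : Q μ b A h) :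
    Q μ b A (fun t => g t * h t) := by
  intro x
  obtain ⟨y, hy1, hy2⟩ := hh x
  obtain ⟨z, hz1, hz2⟩ := hg y
  refine ⟨z, ?_, ?_⟩
  · filter_upwards [hy1, hz1] with ω h1 h2
    rw [h2, h1]
    ring
  · filter_upwards [hy2, hz2] with ω h1 h2
    rw [h2, h1]
    ring

theorem Q.sub {g h : ℝ → ℂ} (hg : Q μ b A g) (hh : Q μ b A h) :
    Q μ b A (fun t => g t - h t) :=
  (hg.add ((hh.smul (-1)))).congr (fun t => by ring)

theorem key_tendsto (hb : Measurable b) (hbdd : ∀ᵐ ω ∂μ, |b ω| ≤ M)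
    (u : Lp ℂ 2 μ) {g : ℕ → ℝ → ℂ} {f : ℝ → ℂ}
    (hgmeas : ∀ n, Measurable (g n)) (hf : Measurable f) (D : ℝ)
    (hgD : ∀ n t, |t| ≤ M → ‖g n t - f t‖ ≤ D)
    (hconv : ∀ t, |t| ≤ M → Tendsto (fun n => g n t) atTop (𝓝 (f t))) :
    Tendsto (fun n => eLpNorm (fun ω => (g n (b ω) - f (b ω)) * u ω) 2 μ) atTop (𝓝 0) := by
  have h2 : (2 : ℝ≥0∞) ≠ 0 := two_ne_zero
  have h2' : (2 : ℝ≥0∞) ≠ ∞ := ENNReal.ofNat_ne_top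
  have hxint : ∫⁻ ω, (‖u ω‖₊ : ℝ≥0∞) ^ (2 : ℝ) ∂μ ≠ ∞ := by
    have h1 := (Lp.memLp u).2
    have := lintegral_rpow_enorm_lt_top_of_eLpNorm_lt_top h2 h2' h1
    simpa [enorm_eq_nnnorm] using this.ne
  have hint : Tendsto
      (fun n => ∫⁻ ω, ((‖(g n (b ω) - f (b ω)) * u ω‖₊ : ℝ≥0∞)) ^ (2 : ℝ) ∂μ)
      atTop (𝓝 0) := by
    have hDz : ((‖(D : ℂ)‖₊ : ℝ≥0∞)) ^ (2 : ℝ) ≠ ∞ :=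
      ENNReal.rpow_ne_top_of_nonneg (by norm_num) ENNReal.coe_ne_top
    have := tendsto_lintegral_of_dominated_convergence'
      (F := fun n ω => ((‖(g n (b ω) - f (b ω)) * u ω‖₊ : ℝ≥0∞)) ^ (2 : ℝ))
      (f := fun _ => (0 : ℝ≥0∞))
      (bound := fun ω => ((‖(D : ℂ)‖₊ : ℝ≥0∞)) ^ (2 : ℝ) * ((‖u ω‖₊ : ℝ≥0∞)) ^ (2 : ℝ))
      (fun n => ((((hgmeas n).sub hf).comp hb).aemeasurable.mul
        (Lp.aestronglyMeasurable u).aemeasurable).enorm.pow aemeasurable_const)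
      (fun n => by
        filter_upwards [hbdd] with ω hω
        rw [← ENNReal.mul_rpow_of_nonneg _ _ (by norm_num : (0:ℝ) ≤ 2)]
        apply ENNReal.rpow_le_rpow _ (by norm_num : (0:ℝ) ≤ 2)
        rw [nnnorm_mul, ← ENNReal.coe_mul, ENNReal.coe_le_coe]
        apply mul_le_mul_left
        have hle : ‖g n (b ω) - f (b ω)‖ ≤ ‖(D : ℂ)‖ := by
          rw [Complex.norm_real]
          exact le_trans (hgD n (b ω) hω) (le_abs_self D)
        exact_mod_cast hle)
      (by
        rw [lintegral_const_mul' _ _ hDz]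
        exact ENNReal.mul_ne_top hDz hxint)
      (by
        filter_upwards [hbdd] with ω hω
        have h0 : Tendsto (fun n => g n (b ω) - f (b ω)) atTop (𝓝 0) := by
          simpa using (hconv (b ω) hω).sub (tendsto_const_nhds (x := f (b ω)))
        have h1 : Tendsto (fun n => (g n (b ω) - f (b ω)) * u ω) atTop (𝓝 0) := by
          simpa using h0.mul_const (u ω)
        have h2 : Tendsto (fun n => ((‖(g n (b ω) - f (b ω)) * u ω‖₊ : ℝ≥0∞)))
            atTop (𝓝 0) := by
          rw [← ENNReal.coe_zero]
          apply ENNReal.tendsto_coe.2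
          have h1' : Tendsto (fun n => ‖(g n (b ω) - f (b ω)) * u ω‖₊) atTop
              (𝓝 (‖(0:ℂ)‖₊)) := (continuous_nnnorm.tendsto (0:ℂ)).comp h1
          simpa [Function.comp] using h1'
        have h3 := (ENNReal.continuous_rpow_const (y := (2:ℝ))).tendsto 0 |>.comp h2
        simpa [ENNReal.zero_rpow_of_pos, Function.comp_def] using h3)
    simpa using this
  have heq : ∀ n, eLpNorm (fun ω => (g n (b ω) - f (b ω)) * u ω) 2 μ
      = (∫⁻ ω, ((‖(g n (b ω) - f (b ω)) * u ω‖₊ : ℝ≥0∞)) ^ (2 : ℝ) ∂μ) ^ (1 / (2:ℝ)) := by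
    intro n
    rw [eLpNorm_eq_lintegral_rpow_enorm_toReal h2 h2']
    norm_num [enorm_eq_nnnorm]
  simp only [heq]
  have := (ENNReal.continuous_rpow_const (y := (1/2 : ℝ))).tendsto 0 |>.comp hint
  simpa [ENNReal.zero_rpow_of_pos, Function.comp_def] using this

theorem Q.lim (hb : Measurable b) (hbdd : ∀ᵐ ω ∂μ, |b ω| ≤ M)
    (hAclosed : A.IsClosed) {g : ℕ → ℝ → ℂ} {f : ℝ → ℂ} (hf : Measurable f)
    (hgmeas : ∀ n, Measurable (g n)) (C : ℝ)
    (hgC : ∀ n t, |t| ≤ M → ‖g n t‖ ≤ C)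
    (hconv : ∀ t, |t| ≤ M → Tendsto (fun n => g n t) atTop (𝓝 (f t)))
    (hg : ∀ n, Q μ b A (g n)) : Q μ b A f := by
  have hfC : ∀ t, |t| ≤ M → ‖f t‖ ≤ C := fun t ht =>
    le_of_tendsto (hconv t ht).norm (Eventually.of_forall fun n => hgC n t ht)
  have hgD : ∀ n t, |t| ≤ M → ‖g n t - f t‖ ≤ C + C := fun n t ht =>
    le_trans (norm_sub_le _ _) (add_le_add (hgC n t ht) (hfC t ht))
  have hmem : ∀ u : Lp ℂ 2 μ, MemLp (fun ω => f (b ω) * u ω) 2 μ := by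
    intro u
    refine MemLp.of_le ((Lp.memLp u).const_mul (C : ℂ))
      (((hf.comp hb).aestronglyMeasurable).mul (Lp.aestronglyMeasurable u)) ?_
    filter_upwards [hbdd] with ω hω
    rw [norm_mul, norm_mul]
    have h1 : ‖f (b ω)‖ ≤ ‖(C : ℂ)‖ := by
      rw [Complex.norm_real]
      exact le_trans (hfC _ hω) (le_abs_self C)
    exact mul_le_mul_of_nonneg_right h1 (norm_nonneg _)
  intro x
  choose y hy1 hy2 using fun n => hg n x
  have key : ∀ (u : Lp ℂ 2 μ) (v : ℕ → Lp ℂ 2 μ),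
      (∀ n, ((v n : X → ℂ)) =ᵐ[μ] fun ω => g n (b ω) * u ω) →
      Tendsto v atTop (𝓝 ((hmem u).toLp _)) := by
    intro u v hv
    apply Lp.tendsto_Lp_of_tendsto_eLpNorm _ (hmem u)
    have heq : ∀ n, eLpNorm (⇑(v n) - fun ω => f (b ω) * u ω) 2 μ
        = eLpNorm (fun ω => (g n (b ω) - f (b ω)) * u ω) 2 μ := by
      intro n
      apply eLpNorm_congr_ae
      filter_upwards [hv n] with ω hω
      simp only [Pi.sub_apply, hω]
      ring
    simp only [heq]
    exact key_tendsto hb hbdd u hgmeas hf (C + C) hgD hconv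
  have h1 := key (x : Lp ℂ 2 μ) (fun n => (y n : Lp ℂ 2 μ)) hy1
  have h2 := key (A x) (fun n => A (y n)) hy2
  have hgraph : ((hmem (x : Lp ℂ 2 μ)).toLp _, (hmem (A x)).toLp _) ∈
      (A.graph : Set (Lp ℂ 2 μ × Lp ℂ 2 μ)) := by
    apply hAclosed.mem_of_tendsto (h1.prodMk_nhds h2)
    exact Eventually.of_forall fun n => A.mem_graph (y n)
  rw [SetLike.mem_coe, LinearPMap.mem_graph_iff] at hgraph
  obtain ⟨z, hz1, hz2⟩ := hgraph
  refine ⟨z, ?_, ?_⟩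
  · rw [hz1]
    exact (hmem (x : Lp ℂ 2 μ)).coeFn_toLp
  · rw [hz2]
    exact (hmem (A x)).coeFn_toLp

end Stmt4Aux

open Stmt4Aux Filter Topology Set in
theorem stmt_4 {X : Type*} [MeasurableSpace X] (μ : Measure X)
    (b : X → ℝ) (hb : Measurable b) (M : ℝ) (hbdd : ∀ᵐ x ∂μ, |b x| ≤ M)
    (B : Lp ℂ 2 μ →L[ℂ] Lp ℂ 2 μ)
    (hB : ∀ g : Lp ℂ 2 μ, (B g : X → ℂ) =ᵐ[μ] fun x => (b x : ℂ) * g x)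
    (A : Lp ℂ 2 μ →ₗ.[ℂ] Lp ℂ 2 μ)
    (hAdense : Dense (A.domain : Set (Lp ℂ 2 μ)))
    (hAclosed : A.IsClosed)
    -- `BA ⊆ AB`: for `x ∈ D(A)`, `Bx ∈ D(A)` and `ABx = BAx`
    (hBA : ∀ x : A.domain, ∃ h : B ↑x ∈ A.domain, A ⟨B ↑x, h⟩ = B (A x)) :
    ∀ f : ℝ → ℂ, Measurable f → (∃ K : ℝ, ∀ t : ℝ, ‖f t‖ ≤ K) →
    ∀ fB : Lp ℂ 2 μ →L[ℂ] Lp ℂ 2 μ,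
      (∀ g : Lp ℂ 2 μ, (fB g : X → ℂ) =ᵐ[μ] fun x => f (b x) * g x) →
      ∀ x : A.domain, ∃ h : fB ↑x ∈ A.domain, A ⟨fB ↑x, h⟩ = fB (A x) := by
  -- `Q` holds for the identity function thanks to `hBA`
  have hQid : Q μ b A (fun t => (t : ℂ)) := by
    intro x
    obtain ⟨h, hAB⟩ := hBA x
    refine ⟨⟨B ↑x, h⟩, ?_, ?_⟩
    · exact hB ↑x
    · rw [hAB]
      exact hB (A x)
  -- `Q` holds for polynomials
  have hQpoly : ∀ p : Polynomial ℝ,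
      Q μ b A (fun t => ((Polynomial.eval t p : ℝ) : ℂ)) := by
    intro p
    induction p using Polynomial.induction_on with
    | C a =>
        exact (Q.one.smul (a : ℂ)).congr (fun t => by simp)
    | add p q hp hq =>
        exact (hp.add hq).congr (fun t => by push_cast [Polynomial.eval_add]; ring)
    | monomial n a ih =>
        refine (ih.mul hQid).congr (fun t => ?_)
        push_cast [Polynomial.eval_mul, Polynomial.eval_pow, Polynomial.eval_C,
          Polynomial.eval_X, pow_succ]
        ring
  -- `Q` holds for (complexifications of) real continuous functions, via Weierstrass
  have hQcont : ∀ g : ℝ → ℝ, Continuous g → Q μ b A (fun t => ((g t : ℝ) : ℂ)) := by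
    intro g hgcont
    rcases lt_or_ge M 0 with hM | hM
    · -- vacuous boundedness region
      refine Q.lim hb hbdd hAclosed (Complex.measurable_ofReal.comp hgcont.measurable)
        (g := fun _ _ => (0 : ℂ)) (fun _ => measurable_const) 0
        (fun n t ht => absurd (le_trans (abs_nonneg t) ht) (not_le.2 hM))
        (fun t ht => absurd (le_trans (abs_nonneg t) ht) (not_le.2 hM))
        (fun _ => Q.zero)
    · obtain ⟨t₀, ht₀, hmax⟩ :=
        (isCompact_Icc (a := -M) (b := M)).exists_isMaxOn
          ⟨0, Set.mem_Icc.2 ⟨by linarith, hM⟩⟩ (continuous_abs.comp hgcont).continuousOn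
      have hpoly : ∀ n : ℕ, ∃ p : Polynomial ℝ, ∀ t ∈ Icc (-M) M,
          |p.eval t - g t| < 1 / (n + 1 : ℝ) := fun n =>
        exists_polynomial_near_of_continuousOn (-M) M g hgcont.continuousOn _ (by positivity)
      choose p hp using hpoly
      refine Q.lim hb hbdd hAclosed (Complex.measurable_ofReal.comp hgcont.measurable)
        (g := fun n t => (((p n).eval t : ℝ) : ℂ))
        (fun n => Complex.measurable_ofReal.comp ((p n).continuous.measurable))
        (|g t₀| + 1) ?_ ?_ (fun n => hQpoly (p n))
      · intro n t ht
        rw [Complex.norm_real, Real.norm_eq_abs]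
        have h1 := hp n t (Set.mem_Icc.2 (abs_le.1 ht))
        have h2 := hmax (Set.mem_Icc.2 (abs_le.1 ht))
        have h3 : (1 : ℝ) / (n + 1 : ℝ) ≤ 1 := by
          rw [div_le_one (by positivity)]
          linarith [Nat.cast_nonneg (α := ℝ) n]
        have h2' : |g t| ≤ |g t₀| := h2
        calc |(p n).eval t| = |g t + ((p n).eval t - g t)| := by congr 1; ring
          _ ≤ |g t| + |(p n).eval t - g t| := abs_add_le _ _
          _ ≤ |g t₀| + 1 := by linarith
      · intro t ht
        rw [tendsto_iff_norm_sub_tendsto_zero]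
        apply squeeze_zero (fun n => norm_nonneg _) (g := fun n : ℕ => 1 / (n + 1 : ℝ))
        · intro n
          have : ((((p n).eval t : ℝ) : ℂ) - ((g t : ℝ) : ℂ)) = (((p n).eval t - g t : ℝ) : ℂ) := by
            push_cast; ring
          rw [this, Complex.norm_real, Real.norm_eq_abs]
          exact le_of_lt (hp n t (Set.mem_Icc.2 (abs_le.1 ht)))
        · exact tendsto_one_div_add_atTop_nhds_zero_nat
  -- `Q` holds for indicators of open sets
  have hQopen : ∀ U : Set ℝ, IsOpen U → Q μ b A (U.indicator fun _ => (1 : ℂ)) := by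
    intro U hU
    rcases eq_or_ne U univ with rfl | hne
    · exact Q.one.congr (fun t => by simp)
    · have hUc : Uᶜ.Nonempty := Set.nonempty_compl.2 hne
      set d : ℝ → ℝ := fun t => Metric.infDist t Uᶜ with hd_def
      have hdcont : Continuous d := Metric.continuous_infDist_pt Uᶜ
      refine Q.lim hb hbdd hAclosed (measurable_const.indicator hU.measurableSet)
        (g := fun n t => ((min 1 ((n : ℝ) * d t) : ℝ) : ℂ))
        (fun n => Complex.measurable_ofReal.comp
          ((continuous_const.min (continuous_const.mul hdcont)).measurable))
        1 ?_ ?_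
        (fun n => hQcont _ (continuous_const.min (continuous_const.mul hdcont)))
      · intro n t ht
        rw [Complex.norm_real, Real.norm_eq_abs, abs_le]
        constructor
        · refine le_min (by norm_num) ?_
          have : (0:ℝ) ≤ (n : ℝ) * d t :=
            mul_nonneg (Nat.cast_nonneg n) (Metric.infDist_nonneg)
          linarith
        · exact min_le_left _ _
      · intro t _
        by_cases ht : t ∈ U
        · have hdpos : 0 < d t := by
            rw [hd_def]
            exact (hU.isClosed_compl.notMem_iff_infDist_pos hUc).1 (by simpa using ht)
          rw [Set.indicator_of_mem ht]
          apply Tendsto.congr' _ (tendsto_const_nhds (x := (1:ℂ)))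
          filter_upwards [eventually_ge_atTop (Nat.ceil (1 / d t))] with n hn
          have h1 : 1 / d t ≤ (n : ℝ) := le_trans (Nat.le_ceil _) (Nat.cast_le.2 hn)
          have h2 : (1 : ℝ) ≤ (n : ℝ) * d t := by
            rw [div_le_iff₀ hdpos] at h1
            linarith
          rw [min_eq_left h2]
          norm_num
        · have hdz : d t = 0 := Metric.infDist_zero_of_mem (by simpa using ht)
          rw [Set.indicator_of_notMem ht]
          have : ∀ n : ℕ, ((min 1 ((n : ℝ) * d t) : ℝ) : ℂ) = 0 := by
            intro n
            rw [hdz]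
            norm_num
          simp only [this]
          exact tendsto_const_nhds
  -- `Q` holds for indicators of Borel sets
  have hQmeas : ∀ E : Set ℝ, MeasurableSet E → Q μ b A (E.indicator fun _ => (1 : ℂ)) := by
    have hgen : (inferInstance : MeasurableSpace ℝ)
        = MeasurableSpace.generateFrom {s : Set ℝ | IsOpen s} := BorelSpace.measurable_eq
    intro E hE
    have hE' : MeasurableSet[MeasurableSpace.generateFrom {s : Set ℝ | IsOpen s}] E := by
      rw [← hgen]; exact hE
    refine MeasurableSpace.generateFrom_induction {s : Set ℝ | IsOpen s}
      (fun s _ => Q μ b A (s.indicator fun _ => (1 : ℂ)))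
      (fun s hs _ => hQopen s hs) ?_ ?_ ?_ E hE'
    · exact Q.zero.congr (fun t => by simp)
    · intro s _ hQs
      refine (Q.one.sub hQs).congr (fun t => ?_)
      by_cases h : t ∈ s <;> simp [h]
    · intro s hs hQs
      have hsm : ∀ n, MeasurableSet (s n) := fun n => hs n
      have hpart : ∀ n : ℕ, Q μ b A ((⋃ i, ⋃ _ : i < n, s i).indicator fun _ => (1 : ℂ)) := by
        intro n
        induction n with
        | zero => exact Q.zero.congr (fun t => by simp)
        | succ n ih =>
            refine ((ih.add (hQs n)).sub (ih.mul (hQs n))).congr (fun t => ?_)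
            have hset : (⋃ i, ⋃ _ : i < n + 1, s i) = (⋃ i, ⋃ _ : i < n, s i) ∪ s n := by
              ext u
              simp only [Set.mem_iUnion, Set.mem_union, Nat.lt_succ_iff_lt_or_eq]
              constructor
              · rintro ⟨i, hi | rfl, hu⟩
                · exact Or.inl ⟨i, hi, hu⟩
                · exact Or.inr hu
              · rintro (⟨i, hi, hu⟩ | hu)
                · exact ⟨i, Or.inl hi, hu⟩
                · exact ⟨n, Or.inr rfl, hu⟩
            rw [hset]
            by_cases h1 : t ∈ ⋃ i, ⋃ _ : i < n, s i <;> by_cases h2 : t ∈ s n <;>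
              simp [Set.indicator_of_mem, Set.indicator_of_notMem, h1, h2]
      refine Q.lim hb hbdd hAclosed
        (measurable_const.indicator (MeasurableSet.iUnion hsm))
        (fun n => measurable_const.indicator
          (MeasurableSet.iUnion fun i => MeasurableSet.iUnion fun _ => hsm i))
        1 ?_ ?_ hpart
      · intro n t _
        by_cases h : t ∈ ⋃ i, ⋃ _ : i < n, s i <;> simp [h]
      · intro t _
        by_cases ht : t ∈ ⋃ i, s i
        · obtain ⟨i, hi⟩ := Set.mem_iUnion.1 ht
          rw [Set.indicator_of_mem ht]
          apply Tendsto.congr' _ (tendsto_const_nhds (x := (1:ℂ)))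
          filter_upwards [eventually_ge_atTop (i + 1)] with n hn
          have : t ∈ ⋃ j, ⋃ _ : j < n, s j := Set.mem_iUnion.2 ⟨i, Set.mem_iUnion.2 ⟨hn, hi⟩⟩
          rw [Set.indicator_of_mem this]
        · rw [Set.indicator_of_notMem ht]
          have : ∀ n : ℕ, ((⋃ i, ⋃ _ : i < n, s i).indicator (fun _ => (1:ℂ)) t) = 0 := by
            intro n
            apply Set.indicator_of_notMem
            intro h
            apply ht
            obtain ⟨i, hi⟩ := Set.mem_iUnion.1 h
            obtain ⟨_, hti⟩ := Set.mem_iUnion.1 hi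
            exact Set.mem_iUnion.2 ⟨i, hti⟩
          simp only [this]
          exact tendsto_const_nhds
  -- `Q` holds for simple functions
  have hQsimple : ∀ s : SimpleFunc ℝ ℂ, Q μ b A ⇑s := by
    intro s
    induction s using SimpleFunc.induction with
    | const c hs =>
        rename_i s'
        refine (Q.smul (c : ℂ) (hQmeas _ hs)).congr (fun t => ?_)
        by_cases h : t ∈ s' <;>
          simp [SimpleFunc.piecewise_apply, Set.indicator_apply, h]
    | add _ hf hg =>
        exact (hf.add hg).congr (fun t => by simp)
  -- `Q` holds for all bounded measurable functions
  intro f hf hKex fB hfB x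
  obtain ⟨K, hK⟩ := hKex
  have hQf : Q μ b A f := by
    refine Q.lim hb hbdd hAclosed hf
      (g := fun n => ⇑(SimpleFunc.approxOn f hf Set.univ 0 (Set.mem_univ 0) n))
      (fun n => (SimpleFunc.approxOn f hf Set.univ 0 (Set.mem_univ 0) n).measurable)
      (K + K) ?_ ?_
      (fun n => hQsimple _)
    · intro n t _
      exact le_trans (SimpleFunc.norm_approxOn_zero_le hf _ t n)
        (add_le_add (hK t) (hK t))
    · intro t _
      exact SimpleFunc.tendsto_approxOn hf _ (by simp)
  obtain ⟨y, hy1, hy2⟩ := hQf x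
  have hxy : fB ↑x = (y : Lp ℂ 2 μ) := Lp.ext ((hfB ↑x).trans hy1.symm)
  have hmem : fB ↑x ∈ A.domain := by rw [hxy]; exact y.2
  refine ⟨hmem, ?_⟩
  have heq : (⟨fB ↑x, hmem⟩ : A.domain) = y := Subtype.ext hxy
  rw [heq]
  exact Lp.ext (hy2.trans (hfB (A x)).symm)
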